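/- For every integer N ≥ 1, the number of permutations σ of {0,…,N−1} satisfying σ^N(0) = 0 equals d(N)·(N−1)!. Hence for a uniformly random permutation σ of {0,…,N−1}, the probability that σ^N(0) = 0 is d(N)/N, whereas σ^N(0) = 0 holds for every cyclus σ. -/

import Mathlib

open Equiv Function

namespace CyclusAux

lemma perm_mem_periodicPts {n : ℕ} (σ : Perm (Fin n)) (x : Fin n) :
    x ∈ periodicPts ⇑σ := by
  refine mk_mem_periodicPts (orderOf_pos σ) ?_
  show σ^[orderOf σ] x = x
  rw [Equiv.Perm.iterate_eq_pow, pow_orderOf_eq_one]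
  rfl

lemma minimalPeriod_conj {n : ℕ} (π σ : Perm (Fin n)) (x : Fin n) :
    minimalPeriod ⇑(π * σ * π⁻¹) (π x) = minimalPeriod ⇑σ x := by
  have key : ∀ m : ℕ, IsPeriodicPt ⇑(π * σ * π⁻¹) m (π x) ↔ IsPeriodicPt ⇑σ m x := by
    intro m
    show ((π * σ * π⁻¹) ^ m) (π x) = π x ↔ (σ ^ m) x = x
    rw [conj_pow]
    simp [Equiv.Perm.mul_apply]
  apply Nat.dvd_antisymm
  · exact ((key _).mpr (isPeriodicPt_minimalPeriod ⇑σ x)).minimalPeriod_dvd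
  · exact ((key _).mp (isPeriodicPt_minimalPeriod _ (π x))).minimalPeriod_dvd

lemma minPeriod_decompose {n : ℕ} (q : Fin n) (e : Perm (Fin n)) :
    minimalPeriod ⇑(Equiv.Perm.decomposeFin.symm (q.succ, e)) (0 : Fin (n + 1))
      = minimalPeriod ⇑e q + 1 := by
  set σ := Equiv.Perm.decomposeFin.symm (q.succ, e) with hσ
  set m := minimalPeriod ⇑e q with hm
  have hm0 : 0 < m := minimalPeriod_pos_of_mem_periodicPts (perm_mem_periodicPts e q)
  have hswap : ∀ y : Fin n, y ≠ q → Equiv.swap (0 : Fin (n + 1)) q.succ y.succ = y.succ := by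
    intro y hy
    exact Equiv.swap_apply_of_ne_of_ne (Fin.succ_ne_zero y)
      (by simpa [Fin.succ_inj] using hy)
  have step : ∀ j, j < m → σ^[j + 1] 0 = (e^[j] q).succ := by
    intro j
    induction j with
    | zero =>
      intro _
      show σ^[1] 0 = (e^[0] q).succ
      simp only [iterate_one, iterate_zero, id_eq]
      rw [hσ]
      exact Equiv.Perm.decomposeFin_symm_apply_zero q.succ e
    | succ j ih =>
      intro hj
      have hj' : j < m := Nat.lt_of_succ_lt hj
      rw [iterate_succ_apply', ih hj', hσ, Equiv.Perm.decomposeFin_symm_apply_succ]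
      have h1 : e (e^[j] q) = e^[j + 1] q := (iterate_succ_apply' e j q).symm
      rw [h1]
      refine hswap _ fun hq => ?_
      have : j + 1 = 0 := (iterate_eq_iterate_iff_of_lt_minimalPeriod
        (f := ⇑e) (x := q) hj hm0).mp (by simpa using hq)
      omega
  have hper : IsPeriodicPt ⇑σ (m + 1) 0 := by
    show σ^[m + 1] 0 = 0
    have h1 : σ^[m] 0 = (e^[m - 1] q).succ := by
      have h := step (m - 1) (by omega)
      rwa [show m - 1 + 1 = m by omega] at h
    rw [iterate_succ_apply', h1, hσ, Equiv.Perm.decomposeFin_symm_apply_succ]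
    have h2 : e ((⇑e)^[m - 1] q) = (⇑e)^[m] q := by
      have h := (iterate_succ_apply' (⇑e) (m - 1) q).symm
      rwa [show (m - 1).succ = m by omega] at h
    rw [h2, hm, iterate_minimalPeriod]
    exact Equiv.swap_apply_right _ _
  have ht := isPeriodicPt_minimalPeriod ⇑σ (0 : Fin (n + 1))
  set t := minimalPeriod ⇑σ (0 : Fin (n + 1)) with htdef
  have ht0 : 0 < t := minimalPeriod_pos_of_mem_periodicPts (perm_mem_periodicPts σ 0)
  have hle : t ≤ m + 1 := hper.minimalPeriod_le (Nat.succ_pos m)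
  by_contra hne
  have htm : t ≤ m := by omega
  have hstep : σ^[t] 0 = (e^[t - 1] q).succ := by
    have h := step (t - 1) (by omega)
    rwa [show t - 1 + 1 = t by omega] at h
  exact Fin.succ_ne_zero _ (by rw [← hstep]; exact ht)

lemma count_basepoint {n : ℕ} (z z' : Fin n) (k : ℕ) :
    (Finset.univ.filter fun σ : Perm (Fin n) => minimalPeriod ⇑σ z = k).card
      = (Finset.univ.filter fun σ : Perm (Fin n) => minimalPeriod ⇑σ z' = k).card := by
  set π := Equiv.swap z z' with hπ
  apply Finset.card_bij (fun σ _ => π * σ * π⁻¹)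
  · intro σ hσ
    simp only [Finset.mem_filter, Finset.mem_univ, true_and] at hσ ⊢
    rw [show z' = π z from (Equiv.swap_apply_left z z').symm, minimalPeriod_conj, hσ]
  · intro a _ b _ h
    have h1 : π * a = π * b := mul_right_cancel h
    exact mul_left_cancel h1
  · intro τ hτ
    simp only [Finset.mem_filter, Finset.mem_univ, true_and] at hτ
    refine ⟨π⁻¹ * τ * π, ?_, by group⟩
    simp only [Finset.mem_filter, Finset.mem_univ, true_and]
    have hz : π⁻¹ z' = z := by
      rw [hπ, Equiv.swap_inv]
      exact Equiv.swap_apply_right z z'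
    calc minimalPeriod ⇑(π⁻¹ * τ * π) z
        = minimalPeriod ⇑(π⁻¹ * τ * (π⁻¹)⁻¹) (π⁻¹ z') := by rw [inv_inv, hz]
      _ = minimalPeriod ⇑τ z' := minimalPeriod_conj π⁻¹ τ z'
      _ = k := hτ

lemma countA : ∀ n : ℕ, ∀ k, 1 ≤ k → k ≤ n → ∀ z : Fin n,
    (Finset.univ.filter fun σ : Perm (Fin n) => minimalPeriod ⇑σ z = k).card
      = Nat.factorial (n - 1) := by
  intro n
  induction n with
  | zero => intro k h1 h2; omega
  | succ n ih =>
    intro k h1 h2 z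
    rw [count_basepoint z 0 k]
    rcases k with _ | _ | m
    · omega
    · -- k = 1 : fixed points of 0
      have hfix : (Finset.univ.filter fun σ : Perm (Fin (n + 1)) => minimalPeriod ⇑σ 0 = 1)
          = (Finset.univ.filter fun σ : Perm (Fin (n + 1)) => σ 0 = 0) := by
        apply Finset.filter_congr
        intro σ _
        simp only [minimalPeriod_eq_one_iff_isFixedPt, IsFixedPt]
      rw [hfix]
      have hcard : (Finset.univ.filter fun σ : Perm (Fin (n + 1)) => σ 0 = 0).card
          = (Finset.univ : Finset (Perm (Fin n))).card := by
        symm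
        apply Finset.card_bij (fun e _ => Equiv.Perm.decomposeFin.symm (0, e))
        · intro e _
          simp [Equiv.Perm.decomposeFin_symm_apply_zero]
        · intro a _ b _ h
          have := Equiv.Perm.decomposeFin.symm.injective h
          exact (Prod.mk.injEq _ _ _ _ ▸ this).2
        · intro τ hτ
          simp only [Finset.mem_filter, Finset.mem_univ, true_and] at hτ
          refine ⟨(Equiv.Perm.decomposeFin τ).2, Finset.mem_univ _, ?_⟩
          have h0 : (Equiv.Perm.decomposeFin τ).1 = τ 0 := by
            conv_rhs => rw [← Equiv.Perm.decomposeFin.symm_apply_apply τ]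
            rw [show Equiv.Perm.decomposeFin τ
              = ((Equiv.Perm.decomposeFin τ).1, (Equiv.Perm.decomposeFin τ).2) from rfl]
            rw [Equiv.Perm.decomposeFin_symm_apply_zero]
          rw [show (0 : Fin (n + 1)) = (Equiv.Perm.decomposeFin τ).1 by rw [h0, hτ]]
          rw [show ((Equiv.Perm.decomposeFin τ).1, (Equiv.Perm.decomposeFin τ).2)
            = Equiv.Perm.decomposeFin τ from rfl]
          exact Equiv.Perm.decomposeFin.symm_apply_apply τ
      rw [hcard, Finset.card_univ, Fintype.card_perm, Fintype.card_fin]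
      rfl
    · -- k = m + 2
      have hm1 : 1 ≤ m + 1 := le_add_self
      have hmn : m + 1 ≤ n := by omega
      have hn0 : 0 < n := lt_of_lt_of_le hm1 hmn
      have hprod : (Finset.univ.filter
            fun qe : Fin n × Perm (Fin n) => minimalPeriod ⇑qe.2 qe.1 = m + 1).card
          = (Finset.univ.filter
            fun σ : Perm (Fin (n + 1)) => minimalPeriod ⇑σ 0 = m + 2).card := by
        apply Finset.card_bij (fun qe _ => Equiv.Perm.decomposeFin.symm (qe.1.succ, qe.2))
        · intro qe hqe
          simp only [Finset.mem_filter, Finset.mem_univ, true_and] at hqe ⊢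
          rw [minPeriod_decompose, hqe]
        · intro a _ b _ h
          have := Equiv.Perm.decomposeFin.symm.injective h
          have h1 := (Prod.mk.injEq _ _ _ _ ▸ this).1
          have h2 := (Prod.mk.injEq _ _ _ _ ▸ this).2
          exact Prod.ext (Fin.succ_injective n h1) h2
        · intro τ hτ
          simp only [Finset.mem_filter, Finset.mem_univ, true_and] at hτ
          have hτ0 : τ 0 ≠ 0 := by
            intro h
            have : minimalPeriod ⇑τ (0 : Fin (n + 1)) = 1 :=
              minimalPeriod_eq_one_iff_isFixedPt.mpr h
            omega
          have h0 : (Equiv.Perm.decomposeFin τ).1 = τ 0 := by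
            conv_rhs => rw [← Equiv.Perm.decomposeFin.symm_apply_apply τ]
            rw [show Equiv.Perm.decomposeFin τ
              = ((Equiv.Perm.decomposeFin τ).1, (Equiv.Perm.decomposeFin τ).2) from rfl]
            rw [Equiv.Perm.decomposeFin_symm_apply_zero]
          obtain ⟨q, hq⟩ : ∃ q : Fin n, (Equiv.Perm.decomposeFin τ).1 = q.succ := by
            refine Fin.eq_succ_of_ne_zero ?_
            rw [h0]; exact hτ0
          have hτeq : Equiv.Perm.decomposeFin.symm (q.succ, (Equiv.Perm.decomposeFin τ).2)
              = τ := by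
            rw [← hq]
            rw [show ((Equiv.Perm.decomposeFin τ).1, (Equiv.Perm.decomposeFin τ).2)
              = Equiv.Perm.decomposeFin τ from rfl]
            exact Equiv.Perm.decomposeFin.symm_apply_apply τ
          refine ⟨(q, (Equiv.Perm.decomposeFin τ).2), ?_, hτeq⟩
          simp only [Finset.mem_filter, Finset.mem_univ, true_and]
          have := minPeriod_decompose q (Equiv.Perm.decomposeFin τ).2
          rw [hτeq, hτ] at this
          omega
      rw [← hprod, Finset.card_filter, Fintype.sum_prod_type]
      have hinner : ∀ q : Fin n,
          (∑ e : Perm (Fin n), if minimalPeriod ⇑e q = m + 1 then 1 else 0)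
            = Nat.factorial (n - 1) := by
        intro q
        rw [← Finset.card_filter]
        exact ih (m + 1) hm1 hmn q
      simp only [hinner]
      rw [Finset.sum_const, Finset.card_univ, Fintype.card_fin, smul_eq_mul,
        show n + 1 - 1 = n from rfl, ← Nat.mul_factorial_pred hn0.ne']

end CyclusAux

/-- A permutation of `Fin N` is a *cyclus* if its cycle decomposition consists of a single
cycle of length `N`; equivalently, every point can be reached from every point by iterating. -/
def IsCyclus {N : ℕ} (σ : Equiv.Perm (Fin N)) : Prop :=
  ∀ x y : Fin N, ∃ m : ℕ, (σ ^ m) x = y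

/-- The number of permutations `σ` of `{0,…,N−1}` with `σ^N(0) = 0` is `d(N)·(N−1)!`;
hence the probability of this event for a uniformly random permutation is `d(N)/N`,
whereas every cyclus satisfies `σ^N(0) = 0`. -/
theorem stmt_1 (N : ℕ) (hN : 1 ≤ N) :
    Nat.card {σ : Equiv.Perm (Fin N) // (σ ^ N) ⟨0, hN⟩ = ⟨0, hN⟩}
        = N.divisors.card * Nat.factorial (N - 1) ∧
    (Nat.card {σ : Equiv.Perm (Fin N) // (σ ^ N) ⟨0, hN⟩ = ⟨0, hN⟩} : ℚ)
        / (Nat.factorial N : ℚ) = (N.divisors.card : ℚ) / N ∧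
    ∀ σ : Equiv.Perm (Fin N), IsCyclus σ → (σ ^ N) ⟨0, hN⟩ = ⟨0, hN⟩ := by
  set z : Fin N := ⟨0, hN⟩ with hz
  have hiff : ∀ σ : Equiv.Perm (Fin N), (σ ^ N) z = z ↔ minimalPeriod ⇑σ z ∣ N := by
    intro σ
    constructor
    · intro h
      exact IsPeriodicPt.minimalPeriod_dvd (show σ^[N] z = z from h)
    · intro h
      have := (isPeriodicPt_minimalPeriod ⇑σ z).trans_dvd h
      exact this
  have hcount : Nat.card {σ : Equiv.Perm (Fin N) // (σ ^ N) z = z}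
      = N.divisors.card * Nat.factorial (N - 1) := by
    rw [Nat.card_eq_fintype_card, Fintype.card_subtype]
    have h1 : (Finset.univ.filter fun σ : Equiv.Perm (Fin N) => (σ ^ N) z = z)
        = (Finset.univ.filter fun σ : Equiv.Perm (Fin N) => minimalPeriod ⇑σ z ∣ N) := by
      apply Finset.filter_congr
      intro σ _
      simp only [hiff σ]
    rw [h1]
    rw [Finset.card_eq_sum_card_fiberwise
      (f := fun σ : Equiv.Perm (Fin N) => minimalPeriod ⇑σ z) (t := N.divisors) ?_]
    · have h2 : ∀ d ∈ N.divisors,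
          ((Finset.univ.filter fun σ : Equiv.Perm (Fin N) => minimalPeriod ⇑σ z ∣ N).filter
            fun σ : Equiv.Perm (Fin N) => minimalPeriod ⇑σ z = d).card = Nat.factorial (N - 1) := by
        intro d hd
        have hdvd : d ∣ N := (Nat.mem_divisors.mp hd).1
        have hd1 : 1 ≤ d := Nat.pos_of_mem_divisors hd
        have hdN : d ≤ N := Nat.le_of_dvd hN hdvd
        have heq : ((Finset.univ.filter fun σ : Equiv.Perm (Fin N) =>
              minimalPeriod ⇑σ z ∣ N).filter fun σ : Equiv.Perm (Fin N) => minimalPeriod ⇑σ z = d)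
            = (Finset.univ.filter fun σ : Equiv.Perm (Fin N) => minimalPeriod ⇑σ z = d) := by
          ext σ
          simp only [Finset.mem_filter, Finset.mem_univ, true_and]
          constructor
          · exact And.right
          · intro h; exact ⟨h ▸ hdvd, h⟩
        rw [heq]
        exact CyclusAux.countA N d hd1 hdN z
      rw [Finset.sum_congr rfl h2, Finset.sum_const, smul_eq_mul]
    · intro σ hσ
      simp only [Finset.mem_coe, Finset.mem_filter, Finset.mem_univ, true_and] at hσ
      exact Nat.mem_divisors.mpr ⟨hσ, by omega⟩
  refine ⟨hcount, ?_, ?_⟩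
  · rw [hcount]
    have hfac : (N : ℚ) * (Nat.factorial (N - 1) : ℚ) = (Nat.factorial N : ℚ) := by
      rw [← Nat.cast_mul, Nat.mul_factorial_pred (Nat.one_le_iff_ne_zero.mp hN)]
    have hN0 : (N : ℚ) ≠ 0 := by positivity
    have hfac0 : (Nat.factorial N : ℚ) ≠ 0 := by positivity
    rw [← hfac]
    push_cast
    field_simp
  · intro σ hσ
    rw [hiff σ]
    set t := minimalPeriod ⇑σ z with htd
    have ht0 : 0 < t := minimalPeriod_pos_of_mem_periodicPts
      (CyclusAux.perm_mem_periodicPts σ z)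
    have hinj : Function.Injective (fun j : Fin t => (⇑σ)^[j.1] z) := by
      intro a b hab
      have := iterate_eq_iterate_iff_of_lt_minimalPeriod
        (f := ⇑σ) (x := z) a.2 b.2
      exact Fin.ext (this.mp hab)
    have hsurj : Function.Surjective (fun j : Fin t => (⇑σ)^[j.1] z) := by
      intro y
      obtain ⟨m, hm⟩ := hσ z y
      refine ⟨⟨m % t, Nat.mod_lt m ht0⟩, ?_⟩
      simp only
      rw [iterate_mod_minimalPeriod_eq]
      exact hm
    have h1 : t ≤ N := by
      have := Fintype.card_le_of_injective _ hinj
      simpa using this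
    have h2 : N ≤ t := by
      have := Fintype.card_le_of_surjective _ hsurj
      simpa using this
    have : t = N := le_antisymm h1 h2
    rw [this]
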